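/- arXiv:1310.6830 — 2 statements merged into one kernel-verified Lean document; each statement's English description precedes it below -/
import Mathlib

section
/- For every n ≥ 2 there exists a monic centered polynomial p of degree n over ℂ having n−1 pairwise distinct attracting fixed points; that is, there exist distinct points z_1, …, z_{n-1} ∈ ℂ with p(z_j) = z_j and |p'(z_j)| < 1 for every j. -/
open Polynomial Complex

/-- For every `n ≥ 2` there exists a monic centered polynomial `p` of degree
`n` over `ℂ` having `n-1` pairwise distinct attracting fixed points. -/
theorem exists_poly_with_attracting_fixed_points (n : ℕ) (hn : 2 ≤ n) :
    ∃ (p : Polynomial ℂ) (z : Fin (n - 1) → ℂ),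
      p.Monic ∧ p.natDegree = n ∧ p.coeff (n - 1) = 0 ∧
      Function.Injective z ∧
      (∀ j, p.eval (z j) = z j) ∧
      (∀ j, ‖p.derivative.eval (z j)‖ < 1) := by
  rcases eq_or_lt_of_le hn with h2 | h3
  · -- n = 2, use p = X^2
    subst h2
    refine ⟨X ^ 2, fun _ => 0, monic_X_pow 2, by simp, by simp, ?_, by simp, by simp⟩
    intro a b _
    have ha := a.2; have hb := b.2
    exact Fin.ext (by omega)
  · -- n ≥ 3
    obtain ⟨m, rfl⟩ : ∃ m, n = m + 1 := ⟨n - 1, (Nat.succ_pred_eq_of_pos (by omega)).symm⟩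
    have hm2 : 2 ≤ m := by omega
    have hm0 : (m : ℂ) ≠ 0 := Nat.cast_ne_zero.mpr (by omega)
    set s : ℂ := -(1 / (m : ℂ)) with hs
    have hs0 : s ≠ 0 := by
      simp [hs, hm0]
    set c : ℂ := 1 - s with hc
    set r : ℂ := s ^ ((m : ℂ)⁻¹) with hr
    have hrm : r ^ m = s := Complex.cpow_nat_inv_pow s (show m ≠ 0 by omega)
    have hr0 : r ≠ 0 := by
      intro h
      apply hs0
      rw [← hrm, h, zero_pow (by omega)]
    set ζ : ℂ := Complex.exp (2 * Real.pi * Complex.I / m) with hζ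
    have hprim : IsPrimitiveRoot ζ m := Complex.isPrimitiveRoot_exp m (by omega)
    have hζm : ζ ^ m = 1 := hprim.pow_eq_one
    set z : Fin (m + 1 - 1) → ℂ := fun j => r * ζ ^ (j : ℕ) with hz
    have hζjm : ∀ k : ℕ, (ζ ^ k) ^ m = 1 := fun k => by
      rw [← pow_mul, mul_comm, pow_mul, hζm, one_pow]
    have hzm : ∀ j, z j ^ m = s := by
      intro j
      rw [hz]
      simp only [mul_pow, hrm, hζjm, mul_one]
    have hz0 : ∀ j, z j ≠ 0 := by
      intro j h
      apply hs0
      rw [← hzm j, h, zero_pow (by omega)]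
    have hdeg : (C c * X : Polynomial ℂ).degree < (X ^ (m + 1) : Polynomial ℂ).degree := by
      rw [degree_X_pow]
      apply lt_of_le_of_lt (degree_mul_le _ _)
      calc (C c).degree + (X : Polynomial ℂ).degree ≤ 0 + 1 :=
            add_le_add degree_C_le degree_X.le
        _ = (1 : WithBot ℕ) := by norm_num
        _ < ((m + 1 : ℕ) : WithBot ℕ) := by exact_mod_cast (by omega : 1 < m + 1)
    refine ⟨X ^ (m + 1) + C c * X, z, ?_, ?_, ?_, ?_, ?_, ?_⟩
    · apply (monic_X_pow (m + 1)).add_of_left hdeg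
    · rw [natDegree_add_eq_left_of_degree_lt hdeg, natDegree_X_pow]
    · simp only [Nat.add_sub_cancel, coeff_add, coeff_X_pow, coeff_C_mul, coeff_X]
      have h1 : m ≠ m + 1 := by omega
      have h2 : m ≠ 1 := by omega
      rw [if_neg h1, if_neg (show ¬ 1 = m from fun h => h2 h.symm)]
      ring
    · intro a b hab
      rw [hz] at hab
      simp only at hab
      have : ζ ^ (a : ℕ) = ζ ^ (b : ℕ) := mul_left_cancel₀ hr0 hab
      have := hprim.pow_inj (by have := a.2; omega) (by have := b.2; omega) this
      exact Fin.ext this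
    · intro j
      have : z j ^ (m + 1) = s * z j := by
        rw [pow_succ, hzm]
      simp only [eval_add, eval_pow, eval_X, eval_mul, eval_C, this, hc]
      ring
    · intro j
      have hd : (X ^ (m + 1) + C c * X : Polynomial ℂ).derivative
          = C ((m : ℂ) + 1) * X ^ m + C c := by
        simp [derivative_X_pow]
      rw [hd]
      simp only [eval_add, eval_mul, eval_C, eval_pow, eval_X, hzm]
      have : ((m : ℂ) + 1) * s + c = 0 := by
        rw [hc, hs]
        field_simp
        ring
      rw [this]
      simp
end

section
/- For a ∈ 𝔻, let μ_a(z) = ((1 − conj(a))/(1 − a)) · (z² − a z)/(1 − conj(a) z). Then the map a ↦ μ_a'(0) = (|a|² − a)/(1 − a) is a bijection of 𝔻 onto 𝔻, with inverse given explicitly by λ ↦ (|λ|² − λ)/(1 − λ); that is, for every a ∈ 𝔻 one has a = (|μ_a'(0)|² − μ_a'(0))/(1 − μ_a'(0)), and every λ ∈ 𝔻 equals μ_a'(0) for exactly one a ∈ 𝔻. -/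
/-- The Blaschke-type quadratic map `μ_a(z) = ((1 - conj a)/(1 - a)) · (z² - a z)/(1 - conj a · z)`. -/
noncomputable def mu (a : ℂ) (z : ℂ) : ℂ :=
  ((1 - starRingEnd ℂ a) / (1 - a)) * ((z ^ 2 - a * z) / (1 - starRingEnd ℂ a * z))

noncomputable def muF (a : ℂ) : ℂ := ((‖a‖ : ℂ) ^ 2 - a) / (1 - a)

lemma mu_hsq (a : ℂ) : ((‖a‖ : ℂ)) ^ 2 = a * starRingEnd ℂ a := by
  rw [Complex.mul_conj]; norm_cast; exact Complex.sq_norm a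

lemma mu_hne (a : ℂ) (ha : ‖a‖ < 1) : (1 : ℂ) - a ≠ 0 := by
  intro h
  have : a = 1 := by linear_combination -h
  simp [this] at ha

lemma mu_habs (a : ℂ) (ha : ‖a‖ < 1) : ‖muF a‖ = ‖a‖ := by
  have h1 : muF a = a * ((starRingEnd ℂ a - 1) / (1 - a)) := by
    rw [muF, mu_hsq]; ring
  have h2 : ‖starRingEnd ℂ a - 1‖ = ‖1 - a‖ := by
    have : starRingEnd ℂ a - 1 = starRingEnd ℂ (a - 1) := by simp
    rw [this, Complex.norm_conj, norm_sub_rev]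
  rw [h1, norm_mul, norm_div, h2, div_self, mul_one]
  simpa using norm_ne_zero_iff.mpr (mu_hne a ha)

lemma mu_hne2 (a : ℂ) (ha : ‖a‖ < 1) : (1 : ℂ) - a * starRingEnd ℂ a ≠ 0 := by
  rw [← mu_hsq]
  intro h
  have h1 : ((1 : ℝ) - ‖a‖ ^ 2 : ℝ) = (0 : ℂ) := by push_cast; linear_combination h
  have h2 : (1 : ℝ) - ‖a‖ ^ 2 = 0 := by exact_mod_cast h1
  nlinarith [norm_nonneg a]

lemma mu_hinv (a : ℂ) (ha : ‖a‖ < 1) : muF (muF a) = a := by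
  have key : ((‖muF a‖ : ℂ)) ^ 2 = a * starRingEnd ℂ a := by
    rw [mu_habs a ha, mu_hsq]
  have e1 : (1 : ℂ) - muF a = (1 - a * starRingEnd ℂ a) / (1 - a) := by
    rw [muF, mu_hsq, eq_div_iff (mu_hne a ha), sub_mul, div_mul_cancel₀ _ (mu_hne a ha)]; ring
  have e2 : a * starRingEnd ℂ a - muF a
      = a * ((1 - a * starRingEnd ℂ a) / (1 - a)) := by
    rw [muF, mu_hsq, mul_div_assoc', eq_div_iff (mu_hne a ha), sub_mul,
      div_mul_cancel₀ _ (mu_hne a ha)]; ring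
  rw [show muF (muF a) = ((‖muF a‖ : ℂ) ^ 2 - muF a) / (1 - muF a) from rfl,
    key, e2, e1, mul_div_cancel_right₀]
  exact div_ne_zero (mu_hne2 a ha) (mu_hne a ha)

lemma mu_hderiv (a : ℂ) (ha : ‖a‖ < 1) : deriv (mu a) 0 = muF a := by
  have h1 : HasDerivAt (fun z : ℂ => z ^ 2 - a * z) (2 * 0 ^ 1 - a * 1) 0 :=
    (hasDerivAt_pow 2 0).sub ((hasDerivAt_id 0).const_mul a)
  have h2 : HasDerivAt (fun z : ℂ => 1 - starRingEnd ℂ a * z)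
      (0 - starRingEnd ℂ a * 1) 0 :=
    (hasDerivAt_const 0 1).sub ((hasDerivAt_id 0).const_mul (starRingEnd ℂ a))
  have h3 := (h1.div h2 (by simp)).const_mul ((1 - starRingEnd ℂ a) / (1 - a))
  have h4 : deriv (mu a) 0 = _ := h3.deriv
  rw [h4, muF, mu_hsq]
  field_simp [mu_hne a ha]
  ring

/-- The map `a ↦ μ_a'(0) = (|a|² - a)/(1 - a)` is a bijection of the unit disk
`𝔻` onto itself, with inverse given by the same formula `λ ↦ (|λ|² - λ)/(1 - λ)`: for every
`a ∈ 𝔻`, `a = (|μ_a'(0)|² - μ_a'(0))/(1 - μ_a'(0))`, and every `λ ∈ 𝔻` equals `μ_a'(0)` for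
exactly one `a ∈ 𝔻`. -/
theorem deriv_mu_at_zero_bijective :
    (∀ a : ℂ, ‖a‖ < 1 →
      deriv (mu a) 0 = ((‖a‖ : ℂ) ^ 2 - a) / (1 - a)) ∧
    Set.BijOn (fun a : ℂ => ((‖a‖ : ℂ) ^ 2 - a) / (1 - a))
      {z : ℂ | ‖z‖ < 1} {z : ℂ | ‖z‖ < 1} ∧
    (∀ a : ℂ, ‖a‖ < 1 →
      a = ((‖deriv (mu a) 0‖ : ℂ) ^ 2 - deriv (mu a) 0) / (1 - deriv (mu a) 0)) ∧
    (∀ lam : ℂ, ‖lam‖ < 1 →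
      ∃! a : ℂ, ‖a‖ < 1 ∧ deriv (mu a) 0 = lam) := by
  refine ⟨fun a ha => mu_hderiv a ha, ⟨?_, ?_, ?_⟩, ?_, ?_⟩
  · intro a ha
    show ‖muF a‖ < 1
    rw [mu_habs a ha]; exact ha
  · intro a ha b hb hab
    have : muF a = muF b := hab
    calc a = muF (muF a) := (mu_hinv a ha).symm
    _ = muF (muF b) := by rw [this]
    _ = b := mu_hinv b hb
  · intro lam hlam
    refine ⟨muF lam, ?_, ?_⟩
    · show ‖muF lam‖ < 1
      rw [mu_habs lam hlam]; exact hlam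
    · exact mu_hinv lam hlam
  · intro a ha
    have h := mu_hderiv a ha
    have ha2 : ‖muF a‖ < 1 := by rw [mu_habs a ha]; exact ha
    rw [h]
    exact (mu_hinv a ha).symm
  · intro lam hlam
    have hml : ‖muF lam‖ < 1 := by rw [mu_habs lam hlam]; exact hlam
    refine ⟨muF lam, ⟨hml, ?_⟩, ?_⟩
    · rw [mu_hderiv _ hml]; exact mu_hinv lam hlam
    · rintro b ⟨hb, hb2⟩
      rw [mu_hderiv b hb] at hb2
      calc b = muF (muF b) := (mu_hinv b hb).symm
      _ = muF lam := by rw [hb2]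
end
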